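/- For the negative gradient flow γ_{(x,y)}(t) = (e^{2t}x, e^{−2t}y) on ℝ^λ × ℝ^{m−λ} and ε > 0, the set V^u = {γ_{(x,y)}(t) : |(x,y)| < ε, t ≥ 0} is an open neighborhood of ℝ^λ × {0} in ℝ^m, and every boundary point (y,z) ∈ ∂V^u satisfies ρ_λ(y) = |z|, where ρ_λ(y) = √(ε² − |y|²) for |y| ≤ ε/√2 and ρ_λ(y) = ε²/(2|y|) for |y| ≥ ε/√2. -/

import Mathlib

set_option maxHeartbeats 1600000


/-- The piecewise function `ρ_λ` : `√(ε² - |y|²)` for `|y| ≤ ε/√2`, and `ε²/(2|y|)` beyond. -/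
noncomputable def rhoFun (ε : ℝ) {n : ℕ} (y : EuclideanSpace ℝ (Fin n)) : ℝ :=
  if ‖y‖ ≤ ε / Real.sqrt 2 then Real.sqrt (ε ^ 2 - ‖y‖ ^ 2) else ε ^ 2 / (2 * ‖y‖)

/-- The flow-out `V^u = {γ_{(x,y)}(t) : |(x,y)| < ε, t ≥ 0}` of the ε-ball under the
negative gradient flow `(e^{2t} x, e^{-2t} y)` is an open neighborhood of `ℝ^λ × {0}`,
and every boundary point `(y,z)` of `V^u` satisfies `ρ_λ(y) = |z|`. -/
theorem flowout_open_and_boundary (l k : ℕ) (ε : ℝ) (hε : 0 < ε)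
    (V : Set (EuclideanSpace ℝ (Fin l) × EuclideanSpace ℝ (Fin k)))
    (hV : V = {p | ∃ (x : EuclideanSpace ℝ (Fin l)) (y : EuclideanSpace ℝ (Fin k)) (t : ℝ),
      ‖x‖ ^ 2 + ‖y‖ ^ 2 < ε ^ 2 ∧ 0 ≤ t ∧
      p = (Real.exp (2 * t) • x, Real.exp (-(2 * t)) • y)}) :
    IsOpen V ∧
    (∀ x : EuclideanSpace ℝ (Fin l), ((x, 0) : EuclideanSpace ℝ (Fin l) ×
      EuclideanSpace ℝ (Fin k)) ∈ V) ∧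
    (∀ p ∈ frontier V, rhoFun ε p.1 = ‖p.2‖) := by
  set F : EuclideanSpace ℝ (Fin l) × EuclideanSpace ℝ (Fin k) → ℝ :=
    fun p => ‖p.1‖ ^ 2 + ‖p.2‖ ^ 2 - (max (‖p.1‖ - ‖p.2‖) 0) ^ 2 with hFdef
  have hFcont : Continuous F := by
    apply Continuous.sub
    · fun_prop
    · fun_prop
  have hVeq : V = F ⁻¹' Set.Iio (ε ^ 2) := by
    rw [hV]; ext p
    simp only [Set.mem_setOf_eq, Set.mem_preimage, Set.mem_Iio]
    constructor
    · rintro ⟨x, y, t, hlt, ht, rfl⟩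
      have he1 : (1 : ℝ) ≤ Real.exp (2 * t) := Real.one_le_exp (by linarith)
      have hef : Real.exp (2 * t) * Real.exp (-(2 * t)) = 1 := by
        rw [← Real.exp_add]; simp
      set e := Real.exp (2 * t)
      set f := Real.exp (-(2 * t))
      have hf : 0 < f := Real.exp_pos _
      have hA : (0:ℝ) ≤ ‖x‖ := norm_nonneg _
      have hB : (0:ℝ) ≤ ‖y‖ := norm_nonneg _
      have hn1 : ‖(e • x, f • y).1‖ = e * ‖x‖ := by
        simp [norm_smul, abs_of_pos (Real.exp_pos (2 * t)), show (0:ℝ) ≤ e from (Real.exp_pos (2 * t)).le]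
      have hn2 : ‖(e • x, f • y).2‖ = f * ‖y‖ := by
        simp [norm_smul, abs_of_pos hf]
      simp only [hFdef, hn1, hn2]
      set A := ‖x‖; set B := ‖y‖
      rcases le_or_gt (e * A) (f * B) with hcase | hcase
      · rw [max_eq_right (by linarith)]
        have hef2 : e ^ 2 * f ^ 2 = 1 := by nlinarith
        have h1 : (e * A) ^ 2 ≤ (f * B) ^ 2 := by
          apply pow_le_pow_left₀ (by positivity) hcase
        have he2 : (1:ℝ) ≤ e ^ 2 := by nlinarith
        have h2 : A ^ 2 ≤ (e * A) ^ 2 := by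
          nlinarith [mul_le_mul_of_nonneg_right he2 (sq_nonneg A)]
        nlinarith [mul_nonneg (show (0:ℝ) ≤ e ^ 2 - 1 by nlinarith)
          (show (0:ℝ) ≤ (f * B) ^ 2 - A ^ 2 by nlinarith)]
      · rw [max_eq_left (by linarith)]
        have key : (e * A) * (f * B) = A * B := by
          rw [show (e * A) * (f * B) = (e * f) * (A * B) by ring, hef, one_mul]
        nlinarith [sq_nonneg (A - B)]
    · intro hp
      rcases le_or_gt ‖p.1‖ ‖p.2‖ with hab | hab
      · refine ⟨p.1, p.2, 0, ?_, le_refl _, ?_⟩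
        · have : max (‖p.1‖ - ‖p.2‖) 0 = 0 := max_eq_right (by linarith)
          simp only [hFdef, this] at hp
          nlinarith
        · simp
      · have ha : 0 < ‖p.1‖ := lt_of_le_of_lt (norm_nonneg _) hab
        have hmax : max (‖p.1‖ - ‖p.2‖) 0 = ‖p.1‖ - ‖p.2‖ := max_eq_left (by linarith)
        have h2ab : 2 * (‖p.1‖ * ‖p.2‖) < ε ^ 2 := by
          simp only [hFdef, hmax] at hp; nlinarith
        rcases eq_or_lt_of_le (norm_nonneg p.2) with hb | hb
        · -- p.2 = 0
          have hp2 : p.2 = 0 := by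
            rw [← norm_eq_zero]; exact hb.symm
          set a := ‖p.1‖
          set t := Real.log (a / ε + 1) with htdef
          have hpos : (1:ℝ) ≤ a / ε + 1 := by
            have : 0 ≤ a / ε := by positivity
            linarith
          have ht0 : 0 ≤ t := Real.log_nonneg hpos
          have he : Real.exp t = a / ε + 1 := Real.exp_log (by linarith)
          have hE : Real.exp (2 * t) = (a / ε + 1) ^ 2 := by
            rw [two_mul, Real.exp_add, he]; ring
          have hgt : a < ε * Real.exp (2 * t) := by
            rw [hE]
            have ha' : ε * (a / ε) = a := by field_simp
            nlinarith [sq_nonneg (a / ε), ha.le, hε]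
          have hef : Real.exp (2 * t) * Real.exp (-(2 * t)) = 1 := by
            rw [← Real.exp_add]; simp
          have hfpos : 0 < Real.exp (-(2 * t)) := Real.exp_pos _
          have hlt2 : Real.exp (-(2 * t)) * a < ε := by
            have := mul_lt_mul_of_pos_left hgt hfpos
            calc Real.exp (-(2 * t)) * a < Real.exp (-(2 * t)) * (ε * Real.exp (2 * t)) := this
              _ = ε := by rw [show Real.exp (-(2 * t)) * (ε * Real.exp (2 * t))
                    = ε * (Real.exp (2 * t) * Real.exp (-(2 * t))) by ring, hef, mul_one]
          refine ⟨Real.exp (-(2 * t)) • p.1, 0, t, ?_, ht0, ?_⟩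
          · have hn : ‖Real.exp (-(2 * t)) • p.1‖ = Real.exp (-(2 * t)) * a := by
              simp [norm_smul, abs_of_pos hfpos]; rfl
            rw [hn, norm_zero]
            nlinarith [mul_nonneg hfpos.le (norm_nonneg p.1)]
          · refine Prod.ext ?_ ?_
            · simp only [smul_smul, hef, one_smul]
            · simp [hp2]
        · -- 0 < ‖p.2‖ < ‖p.1‖
          set a := ‖p.1‖; set b := ‖p.2‖
          have hs : 1 < a / b := (one_lt_div hb).2 hab
          set t := Real.log (a / b) / 4 with htdef
          have ht0 : 0 ≤ t := by
            rw [htdef]; linarith [Real.log_pos hs]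
          have hs4 : Real.exp (4 * t) = a / b := by
            rw [show 4 * t = Real.log (a / b) by rw [htdef]; ring]
            exact Real.exp_log (by positivity)
          have hef : Real.exp (2 * t) * Real.exp (-(2 * t)) = 1 := by
            rw [← Real.exp_add]; simp
          have hfpos : 0 < Real.exp (-(2 * t)) := Real.exp_pos _
          have hepos : 0 < Real.exp (2 * t) := Real.exp_pos _
          refine ⟨Real.exp (-(2 * t)) • p.1, Real.exp (2 * t) • p.2, t, ?_, ht0, ?_⟩
          · have hn1 : ‖Real.exp (-(2 * t)) • p.1‖ = Real.exp (-(2 * t)) * a := by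
              simp [norm_smul, abs_of_pos hfpos]; rfl
            have hn2 : ‖Real.exp (2 * t) • p.2‖ = Real.exp (2 * t) * b := by
              simp [norm_smul, abs_of_pos hepos]; rfl
            rw [hn1, hn2]
            have hexp1 : Real.exp (-(2 * t)) ^ 2 = (a / b)⁻¹ := by
              rw [show Real.exp (-(2 * t)) ^ 2 = Real.exp (-(2 * t) + -(2 * t)) by
                rw [Real.exp_add]; ring]
              rw [show (-(2 * t) + -(2 * t)) = -(4 * t) by ring, Real.exp_neg, hs4]
            have hexp2 : Real.exp (2 * t) ^ 2 = a / b := by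
              rw [show Real.exp (2 * t) ^ 2 = Real.exp (2 * t + 2 * t) by
                rw [Real.exp_add]; ring]
              rw [show (2 * t + 2 * t) = 4 * t by ring, hs4]
            have hcalc : (Real.exp (-(2 * t)) * a) ^ 2 + (Real.exp (2 * t) * b) ^ 2
                = 2 * (a * b) := by
              rw [mul_pow, mul_pow, hexp1, hexp2]
              field_simp
              ring
            rw [hcalc]; exact h2ab
          · refine Prod.ext ?_ ?_
            · simp only [smul_smul, hef, one_smul]
            · simp only [smul_smul]
              rw [show Real.exp (-(2 * t)) * Real.exp (2 * t) = 1 by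
                rw [← Real.exp_add]; simp, one_smul]
  have hopen : IsOpen V := by
    rw [hVeq]; exact isOpen_Iio.preimage hFcont
  refine ⟨hopen, ?_, ?_⟩
  · intro x
    rw [hVeq]
    simp only [Set.mem_preimage, Set.mem_Iio, hFdef]
    have : max (‖x‖ - ‖(0 : EuclideanSpace ℝ (Fin k))‖) 0 = ‖x‖ := by
      simp [norm_nonneg]
    simp only [norm_zero] at this ⊢
    rw [show max (‖x‖ - 0) 0 = ‖x‖ by simpa using this]
    nlinarith [sq_nonneg ‖x‖]
  · intro p hp
    have hfr : F p = ε ^ 2 := by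
      have hcl : closure V ⊆ F ⁻¹' Set.Iic (ε ^ 2) := by
        apply closure_minimal
        · rw [hVeq]; intro q hq
          simp only [Set.mem_preimage, Set.mem_Iio] at hq
          simp only [Set.mem_preimage, Set.mem_Iic]
          exact hq.le
        · exact (isClosed_Iic).preimage hFcont
      rw [hopen.frontier_eq] at hp
      have h1 : F p ≤ ε ^ 2 := hcl hp.1
      have h2 : ¬ (F p < ε ^ 2) := by
        intro h; exact hp.2 (by rw [hVeq]; exact h)
      exact le_antisymm h1 (not_lt.1 h2)
    set a := ‖p.1‖; set b := ‖p.2‖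
    have ha : 0 ≤ a := norm_nonneg _
    have hb : 0 ≤ b := norm_nonneg _
    rcases le_or_gt a b with hab | hab
    · have hmax : max (a - b) 0 = 0 := max_eq_right (by linarith)
      have hsum : a ^ 2 + b ^ 2 = ε ^ 2 := by
        have := hfr; simp only [hFdef, hmax] at this; nlinarith
      have h2a : 2 * a ^ 2 ≤ ε ^ 2 := by nlinarith
      have hs2 : (Real.sqrt 2) ^ 2 = 2 := Real.sq_sqrt (by norm_num)
      have hs2pos : 0 < Real.sqrt 2 := Real.sqrt_pos.2 (by norm_num)
      have hle : a ≤ ε / Real.sqrt 2 := by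
        rw [le_div_iff₀ hs2pos]
        nlinarith [sq_nonneg (a * Real.sqrt 2 - ε)]
      rw [rhoFun, if_pos hle]
      rw [show ε ^ 2 - a ^ 2 = b ^ 2 by linarith]
      exact Real.sqrt_sq hb
    · have hmax : max (a - b) 0 = a - b := max_eq_left (by linarith)
      have h2ab : 2 * (a * b) = ε ^ 2 := by
        have := hfr
        simp only [hFdef, hmax] at this
        nlinarith
      have hapos : 0 < a := lt_of_le_of_lt hb hab
      have hnle : ¬ (a ≤ ε / Real.sqrt 2) := by
        intro h
        have hs2 : (Real.sqrt 2) ^ 2 = 2 := Real.sq_sqrt (by norm_num)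
        have hs2pos : 0 < Real.sqrt 2 := Real.sqrt_pos.2 (by norm_num)
        rw [le_div_iff₀ hs2pos] at h
        have ha2 : 2 * a ^ 2 ≤ ε ^ 2 := by
          nlinarith [mul_le_mul h h (by positivity) hε.le, hs2]
        nlinarith [mul_lt_mul_of_pos_left hab hapos]
      rw [rhoFun, if_neg hnle]
      rw [eq_comm, eq_div_iff (by positivity)]
      linarith
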